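/- If C₁ and C₂ are Baker classes of ordered graphs, then C₁ ⊕ C₂ is a Baker class. -/

import Mathlib

/-- A layering of a simple graph: adjacent vertices differ by at most 1. -/
def IsLayering {V : Type*} (G : SimpleGraph V) (lam : V → ℤ) : Prop :=
  ∀ ⦃u v : V⦄, G.Adj u v → |lam u - lam v| ≤ 1

/-- The spanning subgraph of `G` keeping only the edges with both ends in `U`.
Reachability and distances between vertices of `U` in this graph coincide with those
in the induced subgraph `G[U]`. -/
def restrictSet {V : Type*} (G : SimpleGraph V) (U : Set V) : SimpleGraph V where
  Adj u v := G.Adj u v ∧ u ∈ U ∧ v ∈ U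
  symm := ⟨fun _ _ ⟨h, hu, hv⟩ => ⟨h.symm, hv, hu⟩⟩
  loopless := ⟨fun u ⟨h, _, _⟩ => G.loopless.irrefl u h⟩

/-- `BakerWins G t S r` : Destroyer wins the Baker game in at most `t` rounds on the state
whose ordered graph is the subgraph of `G` induced on `S` (with the inherited vertex order)
and whose sequence is `r` (0-indexed: `r 0` is the first term `r₁`).
If the vertex set is empty, Destroyer has won; otherwise he needs `t ≥ 1` and either
(Delete) he wins on the graph minus its smallest vertex with the tail of the sequence, or
(Restrict) there is a layering `lam` of the current graph such that for every interval of
at most `r 0` consecutive integers, he wins on the induced subgraph on the corresponding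
layers with the tail of the sequence. -/
def BakerWins {V : Type*} [LinearOrder V] (G : SimpleGraph V) :
    ℕ → Set V → (ℕ → ℕ) → Prop
  | 0, S, _ => S = ∅
  | t + 1, S, r => S = ∅ ∨
      ((∃ v ∈ S, (∀ u ∈ S, v ≤ u) ∧ BakerWins G t (S \ {v}) (fun i => r (i + 1))) ∨
       (∃ lam : V → ℤ,
          (∀ u ∈ S, ∀ w ∈ S, G.Adj u w → |lam u - lam w| ≤ 1) ∧
          ∀ a b : ℤ, b + 1 ≤ a + (r 0 : ℤ) →
            BakerWins G t {v | v ∈ S ∧ lam v ∈ Set.Icc a b} (fun i => r (i + 1))))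

/-- An ordered graph: a finite simple graph with a linear order on its vertices. -/
structure OrderedGraph : Type 1 where
  V : Type
  [fin : Fintype V]
  [ord : LinearOrder V]
  graph : SimpleGraph V

attribute [instance] OrderedGraph.fin OrderedGraph.ord

/-- A class of ordered graphs is a Baker class if for every infinite sequence of positive
integers `r` there is `t` such that Destroyer wins the Baker game on `(G, r)` in `t` rounds
for every `G` in the class. -/
def IsBakerClass (C : Set OrderedGraph) : Prop :=
  ∀ r : ℕ → ℕ, (∀ i, 0 < r i) → ∃ t : ℕ, ∀ O ∈ C, BakerWins O.graph t Set.univ r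

/-- The induced ordered subgraph on a set of vertices, with the inherited order. -/
noncomputable def OrderedGraph.induce (O : OrderedGraph) (S : Set O.V) : OrderedGraph where
  V := ↥S
  fin := S.toFinite.fintype
  graph := O.graph.induce S

/-- `C` is the vertex set of a connected component of `G − B`. -/
def IsComponentOf {V : Type*} (G : SimpleGraph V) (B C : Set V) : Prop :=
  ∃ x, x ∉ B ∧ C = {y | (restrictSet G Bᶜ).Reachable x y}

/-- The clique-sum class `C₁ ⊕ C₂`: ordered graphs `G` with a base `B ⊆ V(G)` such that
`G[B] ∈ C₁` and for every connected component `C` of `G − B`: `G[C] ∈ C₂`, the set of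
vertices of `B` with a neighbor in `C` induces a clique, and all its vertices are smaller
than all vertices of `C`. -/
def CliqueSum (C₁ C₂ : Set OrderedGraph) : Set OrderedGraph :=
  {O | ∃ B : Set O.V, O.induce B ∈ C₁ ∧
    ∀ C : Set O.V, IsComponentOf O.graph B C →
      O.induce C ∈ C₂ ∧
      (∀ x ∈ B, (∃ c ∈ C, O.graph.Adj x c) →
        ∀ y ∈ B, (∃ c ∈ C, O.graph.Adj y c) → x ≠ y → O.graph.Adj x y) ∧
      (∀ x ∈ B, (∃ c ∈ C, O.graph.Adj x c) → ∀ c ∈ C, x < c)}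

section Aux

variable {V : Type*} [LinearOrder V] {G : SimpleGraph V}

lemma bakerWins_zero_iff {S : Set V} {r : ℕ → ℕ} : BakerWins G 0 S r ↔ S = ∅ := Iff.rfl

lemma bakerWins_succ_iff {t : ℕ} {S : Set V} {r : ℕ → ℕ} :
    BakerWins G (t + 1) S r ↔ (S = ∅ ∨
      ((∃ v ∈ S, (∀ u ∈ S, v ≤ u) ∧ BakerWins G t (S \ {v}) (fun i => r (i + 1))) ∨
       (∃ lam : V → ℤ,
          (∀ u ∈ S, ∀ w ∈ S, G.Adj u w → |lam u - lam w| ≤ 1) ∧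
          ∀ a b : ℤ, b + 1 ≤ a + (r 0 : ℤ) →
            BakerWins G t {v | v ∈ S ∧ lam v ∈ Set.Icc a b} (fun i => r (i + 1))))) :=
  Iff.rfl

lemma bakerWins_empty (t : ℕ) (r : ℕ → ℕ) : BakerWins G t (∅ : Set V) r := by
  cases t with
  | zero => rfl
  | succ t => exact Or.inl rfl

lemma bakerWins_congr {t : ℕ} {S : Set V} {r r' : ℕ → ℕ} (h : ∀ i, r i = r' i)
    (hw : BakerWins G t S r) : BakerWins G t S r' := by
  have : r = r' := funext h
  exact this ▸ hw

lemma bakerWins_anti : ∀ {t : ℕ} {S : Set V} {r r' : ℕ → ℕ}, (∀ i, r' i ≤ r i) →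
    BakerWins G t S r → BakerWins G t S r' := by
  intro t
  induction t with
  | zero => intro S r r' _ hw; exact hw
  | succ t ih =>
    intro S r r' h hw
    rcases hw with h0 | ⟨v, hv, hmin, hw⟩ | ⟨lam, hlam, hw⟩
    · exact Or.inl h0
    · exact Or.inr (Or.inl ⟨v, hv, hmin, ih (fun i => h (i + 1)) hw⟩)
    · refine Or.inr (Or.inr ⟨lam, hlam, fun a b hab => ?_⟩)
      refine ih (fun i => h (i + 1)) (hw a b ?_)
      have := h 0
      omega

lemma bakerWins_pad {t : ℕ} {S : Set V} {r : ℕ → ℕ}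
    (h : BakerWins G t S (fun i => r (i + 1))) : BakerWins G (t + 1) S r := by
  refine Or.inr (Or.inr ⟨fun _ => 0, fun _ _ _ _ _ => by simp, fun a b hab => ?_⟩)
  by_cases h0 : (0 : ℤ) ∈ Set.Icc a b
  · have hset : {v | v ∈ S ∧ (fun (_ : V) => (0:ℤ)) v ∈ Set.Icc a b} = S := by ext v; simp [h0]
    rw [hset]; exact h
  · have hset : {v | v ∈ S ∧ (fun (_ : V) => (0:ℤ)) v ∈ Set.Icc a b} = (∅ : Set V) := by
      ext v; simp [h0]
    rw [hset]; exact bakerWins_empty t _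

lemma bakerWins_subset : ∀ {t : ℕ} {S S' : Set V} {r : ℕ → ℕ}, S' ⊆ S →
    BakerWins G t S r → BakerWins G t S' r := by
  intro t
  induction t with
  | zero =>
    intro S S' r hsub h
    exact Set.subset_empty_iff.1 (h ▸ hsub)
  | succ t ih =>
    intro S S' r hsub h
    rcases h with h0 | ⟨v, hv, hmin, hw⟩ | ⟨lam, hlam, hw⟩
    · exact Or.inl (Set.subset_empty_iff.1 (h0 ▸ hsub))
    · by_cases hv' : v ∈ S'
      · refine Or.inr (Or.inl ⟨v, hv', fun u hu => hmin u (hsub hu), ih ?_ hw⟩)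
        exact fun u hu => ⟨hsub hu.1, hu.2⟩
      · have hss : S' ⊆ S \ {v} := fun u hu => ⟨hsub hu, fun he => hv' (he ▸ hu)⟩
        exact bakerWins_pad (ih hss hw)
    · refine Or.inr (Or.inr ⟨lam, fun u hu w hw' => hlam u (hsub hu) w (hsub hw'), fun a b hab => ?_⟩)
      refine ih ?_ (hw a b hab)
      intro u hu
      exact ⟨hsub hu.1, hu.2⟩


lemma bakerWins_succ_mono : ∀ {t : ℕ} {S : Set V} {r : ℕ → ℕ},
    BakerWins G t S r → BakerWins G (t + 1) S r := by
  intro t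
  induction t with
  | zero => intro S r h; exact Or.inl h
  | succ t ih =>
    intro S r h
    rcases h with h0 | ⟨v, hv, hmin, hw⟩ | ⟨lam, hlam, hw⟩
    · exact Or.inl h0
    · exact Or.inr (Or.inl ⟨v, hv, hmin, ih hw⟩)
    · exact Or.inr (Or.inr ⟨lam, hlam, fun a b hab => ih (hw a b hab)⟩)

lemma bakerWins_mono {t t' : ℕ} (h : t ≤ t') {S : Set V} {r : ℕ → ℕ}
    (hw : BakerWins G t S r) : BakerWins G t' S r := by
  induction t' with
  | zero => exact Nat.le_zero.1 h ▸ hw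
  | succ t' ih =>
    rcases Nat.lt_or_ge t (t' + 1) with h' | h'
    · exact bakerWins_succ_mono (ih (by omega))
    · exact (by omega : t = t' + 1) ▸ hw

end Aux
section Comps

variable {V : Type*} (G : SimpleGraph V)

/-- The connected component of `x` in the restriction of `G` to `A`. -/
def Comp (A : Set V) (x : V) : Set V := {y | (restrictSet G A).Reachable x y}

/-- The attachment set of the component of `x`. -/
def KAtt (A B : Set V) (x : V) : Set V := {u | u ∈ B ∧ ∃ c ∈ Comp G A x, G.Adj u c}

variable {G}

lemma mem_comp_self (A : Set V) (x : V) : x ∈ Comp G A x := SimpleGraph.Reachable.refl x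

lemma walk_mem {A : Set V} : ∀ {x y : V}, (restrictSet G A).Walk x y → x ∈ A → y ∈ A := by
  intro x y w
  induction w with
  | nil => exact fun h => h
  | cons h p ih => exact fun _ => ih h.2.2

lemma comp_subset {A : Set V} {x : V} (hx : x ∈ A) : Comp G A x ⊆ A := by
  intro y hy
  exact hy.elim fun w => walk_mem w hx

lemma comp_eq_of_mem {A : Set V} {x y : V} (h : y ∈ Comp G A x) :
    Comp G A y = Comp G A x := by
  ext z
  exact ⟨fun hz => (h : (restrictSet G A).Reachable x y).trans hz,
    fun hz => (h : (restrictSet G A).Reachable x y).symm.trans hz⟩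

lemma restrictSet_mono {A A' : Set V} (h : A ⊆ A') : restrictSet G A ≤ restrictSet G A' :=
  fun _ _ ha => ⟨ha.1, h ha.2.1, h ha.2.2⟩

lemma reach_shrink {A A' : Set V} : ∀ {x y : V}, (restrictSet G A).Walk x y →
    (∀ z, (restrictSet G A).Reachable x z → z ∈ A') → (restrictSet G A').Reachable x y := by
  intro x y w
  induction w with
  | nil => exact fun _ => SimpleGraph.Reachable.refl _
  | @cons x' z' y' hadj p ih =>
    intro h
    have hadj' : (restrictSet G A').Adj x' z' :=
      ⟨hadj.1, h x' (SimpleGraph.Reachable.refl _), h z' hadj.reachable⟩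
    exact hadj'.reachable.trans (ih (fun z hz => h z (hadj.reachable.trans hz)))

lemma comp_eq_shrink {A A' : Set V} {x : V} (hA' : A' ⊆ A)
    (hsub : Comp G A x ⊆ A') : Comp G A' x = Comp G A x := by
  ext y
  constructor
  · intro hy
    exact hy.mono (restrictSet_mono hA')
  · intro hy
    exact hy.elim fun w => reach_shrink w (fun z hz => hsub hz)

end Comps
section Transfer

variable {V : Type*} [LinearOrder V]

lemma bakerWins_induce_iff (G : SimpleGraph V) (B : Set V) :
    ∀ (t : ℕ) (T : Set B) (r : ℕ → ℕ),
      BakerWins (G.induce B) t T r ↔ BakerWins G t ((↑) '' T : Set V) r := by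
  classical
  intro t
  induction t with
  | zero =>
    intro T r
    constructor
    · intro h; rw [bakerWins_zero_iff] at h ⊢; simp [h]
    · intro h; rw [bakerWins_zero_iff] at h ⊢; exact Set.image_eq_empty.1 h
  | succ t ih =>
    intro T r
    constructor
    · rintro (h0 | ⟨v, hv, hmin, hwin⟩ | ⟨lam, hlam, hwin⟩)
      · left; simp [h0]
      · right; left
        refine ⟨↑v, ⟨v, hv, rfl⟩, ?_, ?_⟩
        · rintro u ⟨u', hu', rfl⟩
          exact Subtype.coe_le_coe.2 (hmin u' hu')
        · have hset : ((↑) '' T : Set V) \ {(↑v : V)} = (↑) '' (T \ {v}) := by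
            rw [← Set.image_singleton, ← Set.image_diff Subtype.coe_injective]
          rw [hset]
          exact (ih _ _).1 hwin
      · right; right
        refine ⟨fun x => if h : x ∈ B then lam ⟨x, h⟩ else 0, ?_, ?_⟩
        · rintro u ⟨u', hu', rfl⟩ w ⟨w', hw', rfl⟩ hadj
          dsimp only
          rw [dif_pos u'.2, dif_pos w'.2, Subtype.coe_eta, Subtype.coe_eta]
          exact hlam u' hu' w' hw' (by simpa using hadj)
        · intro a b hab
          have hset : {x : V | x ∈ ((↑) '' T : Set V) ∧
              (if h : x ∈ B then lam ⟨x, h⟩ else 0) ∈ Set.Icc a b} =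
              (↑) '' {y | y ∈ T ∧ lam y ∈ Set.Icc a b} := by
            ext x
            constructor
            · rintro ⟨⟨y, hy, rfl⟩, hI⟩
              refine ⟨y, ⟨hy, ?_⟩, rfl⟩
              rwa [dif_pos y.2, Subtype.coe_eta] at hI
            · rintro ⟨y, ⟨hy, hI⟩, rfl⟩
              refine ⟨⟨y, hy, rfl⟩, ?_⟩
              rwa [dif_pos y.2, Subtype.coe_eta]
          rw [hset]
          exact (ih _ _).1 (hwin a b hab)
    · rintro (h0 | ⟨v, hv, hmin, hwin⟩ | ⟨lam, hlam, hwin⟩)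
      · left; exact Set.image_eq_empty.1 h0
      · obtain ⟨v', hv', rfl⟩ := hv
        right; left
        refine ⟨v', hv', fun u hu => Subtype.coe_le_coe.1 (hmin ↑u ⟨u, hu, rfl⟩), ?_⟩
        refine (ih _ _).2 ?_
        have hset : ((↑) '' (T \ {v'}) : Set V) = ((↑) '' T : Set V) \ {(↑v' : V)} := by
          rw [← Set.image_singleton, ← Set.image_diff Subtype.coe_injective]
        rw [hset]
        exact hwin
      · right; right
        refine ⟨fun y => lam ↑y, ?_, ?_⟩
        · intro u hu w hw hadj
          exact hlam ↑u ⟨u, hu, rfl⟩ ↑w ⟨w, hw, rfl⟩ (by simpa using hadj)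
        · intro a b hab
          refine (ih _ _).2 ?_
          have hset : ((↑) '' {y | y ∈ T ∧ lam ↑y ∈ Set.Icc a b} : Set V) =
              {x | x ∈ ((↑) '' T : Set V) ∧ lam x ∈ Set.Icc a b} := by
            ext x
            constructor
            · rintro ⟨y, ⟨hy, hI⟩, rfl⟩
              exact ⟨⟨y, hy, rfl⟩, hI⟩
            · rintro ⟨⟨y, hy, rfl⟩, hI⟩
              exact ⟨y, ⟨hy, hI⟩, rfl⟩
          rw [hset]
          exact hwin a b hab
  
end Transfer
/-- The invariant state for Destroyer's strategy on a clique-sum: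
`S` is the current vertex set, `B ⊆ S` the current base, `b` the remaining budget for the
base game, `j` the number of base moves already made, `k` the number of real moves made. -/
structure St {V : Type*} [LinearOrder V] (G : SimpleGraph V) (r' s : ℕ → ℕ)
    (t₁ t₂ : ℕ) (b j k : ℕ) (S B : Set V) : Prop where
  hBS : B ⊆ S
  hjb : j + b ≤ t₁
  hk : k ≤ 2 * j + 1
  hbase : BakerWins G b B (fun i => r' (i + j))
  hcomp : ∀ x ∈ S \ B, BakerWins G t₂ (Comp G (S \ B) x) s
  hclique : ∀ x ∈ S \ B, ∀ u ∈ KAtt G (S \ B) B x, ∀ w ∈ KAtt G (S \ B) B x,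
    u ≠ w → G.Adj u w
  hord : ∀ x ∈ S \ B, ∀ u ∈ KAtt G (S \ B) B x, ∀ c ∈ Comp G (S \ B) x, u < c
  hke : (∃ x ∈ S \ B, KAtt G (S \ B) B x = ∅) → k ≤ 2 * j

section Step

variable {V : Type*} [Fintype V] [LinearOrder V]

/-- One "no empty-attachment components" step of Destroyer's strategy: mirror a base move. -/
lemma step (G : SimpleGraph V) (r r' s : ℕ → ℕ) (t₁ t₂ : ℕ)
    (hr' : ∀ j k, k ≤ 2 * j + 1 → r k ≤ r' j)
    (b : ℕ)
    (IH : ∀ b' j k (S B : Set V), b' < b → St G r' s t₁ t₂ b' j k S B →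
      BakerWins G (2 * t₁ + 2 + t₂ - k) S (fun i => r (i + k)))
    (j k : ℕ) (S B : Set V) (hst : St G r' s t₁ t₂ b j k S B)
    (hne : ∀ x ∈ S \ B, (KAtt G (S \ B) B x).Nonempty) :
    BakerWins G (2 * t₁ + 2 + t₂ - k) S (fun i => r (i + k)) := by
  classical
  obtain ⟨hBS, hjb, hk, hbase, hcomp, hclique, hord, hke⟩ := hst
  by_cases hS : S = ∅
  · subst hS; exact bakerWins_empty _ _
  have hBne : B ≠ ∅ := by
    rintro rfl
    obtain ⟨x, hx⟩ := Set.nonempty_iff_ne_empty.2 hS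
    obtain ⟨u, hu⟩ := hne x ⟨hx, fun h => h⟩
    exact hu.1
  cases b with
  | zero => exact absurd hbase hBne
  | succ b =>
    obtain ⟨t, ht⟩ : ∃ t, 2 * t₁ + 2 + t₂ - k = t + 1 := ⟨2 * t₁ + 1 + t₂ - k, by omega⟩
    rw [ht, bakerWins_succ_iff]
    set A := S \ B with hA
    rcases hbase with hB0 | ⟨v, hvB, hvmin, hw⟩ | ⟨lam, hlam, hw⟩
    · exact absurd hB0 hBne
    · -- Delete branch
      right; left
      refine ⟨v, hBS hvB, ?_, ?_⟩
      · intro u hu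
        by_cases huB : u ∈ B
        · exact hvmin u huB
        · obtain ⟨w', hw'⟩ := hne u ⟨hu, huB⟩
          exact le_of_lt (lt_of_le_of_lt (hvmin w' hw'.1)
            (hord u ⟨hu, huB⟩ w' hw' u (mem_comp_self _ u)))
      · have hset : (S \ {v}) \ (B \ {v}) = A := by
          ext z
          by_cases hz : z = v
          · subst hz; simp [hA, hvB]
          · simp [hA, hz]
        have hst' : St G r' s t₁ t₂ b (j + 1) (k + 1) (S \ {v}) (B \ {v}) := by
          refine ⟨fun u hu => ⟨hBS hu.1, hu.2⟩, by omega, by omega,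
            bakerWins_congr (fun i => congrArg r' (by omega)) hw, ?_, ?_, ?_, fun _ => by omega⟩
          · intro x hx
            rw [hset] at hx ⊢
            exact hcomp x hx
          · intro x hx u hu w' hw' hne'
            rw [hset] at hx hu hw'
            exact hclique x hx u ⟨hu.1.1, hu.2⟩ w' ⟨hw'.1.1, hw'.2⟩ hne'
          · intro x hx u hu c hc
            rw [hset] at hx hu hc
            exact hord x hx u ⟨hu.1.1, hu.2⟩ c hc
        have := IH b (j + 1) (k + 1) (S \ {v}) (B \ {v}) (Nat.lt_succ_self b) hst'
        rw [show 2 * t₁ + 2 + t₂ - (k + 1) = t from by omega] at this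
        exact bakerWins_congr (fun i => congrArg r (by omega)) this
    · -- Restrict branch
      right; right
      set lam2 : V → ℤ := fun v => if v ∈ A then sInf (lam '' KAtt G A B v) else lam v
        with hlam2def
      have hlam2B : ∀ v ∈ B, lam2 v = lam v := by
        intro v hv
        simp only [hlam2def, if_neg (fun h : v ∈ A => h.2 hv)]
      have hlam2A : ∀ v ∈ A, lam2 v = sInf (lam '' KAtt G A B v) := by
        intro v hv
        simp only [hlam2def, if_pos hv]
      have hmem : ∀ v ∈ A, lam2 v ∈ lam '' KAtt G A B v := by
        intro v hv
        rw [hlam2A v hv]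
        exact Set.Nonempty.csInf_mem ((hne v hv).image lam) (Set.toFinite _)
      have hle : ∀ v ∈ A, ∀ u ∈ KAtt G A B v, lam2 v ≤ lam u := by
        intro v hv u hu
        rw [hlam2A v hv]
        exact csInf_le (Set.Finite.bddBelow (Set.toFinite _)) ⟨u, hu, rfl⟩
      have hcompeq : ∀ u ∈ A, ∀ w ∈ A, Comp G A u = Comp G A w → lam2 u = lam2 w := by
        intro u hu w hw hcc
        rw [hlam2A u hu, hlam2A w hw]
        simp only [KAtt, hcc]
      have hBA : ∀ u ∈ B, ∀ w ∈ A, G.Adj u w → |lam2 u - lam2 w| ≤ 1 := by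
        intro u hu w hw hadj
        obtain ⟨x₀, hx₀K, hx₀⟩ := hmem w hw
        have huK : u ∈ KAtt G A B w := ⟨hu, w, mem_comp_self _ w, hadj⟩
        have h1 : lam2 w ≤ lam u := hle w hw u huK
        have h2 : |lam u - lam x₀| ≤ 1 := by
          rcases eq_or_ne u x₀ with rfl | hne'
          · simp
          · exact hlam u hu x₀ hx₀K.1 (hclique w hw u huK x₀ hx₀K hne')
        rw [hlam2B u hu, abs_le]
        rw [abs_le] at h2
        constructor <;> omega
      have hlay : ∀ u ∈ S, ∀ w ∈ S, G.Adj u w → |lam2 u - lam2 w| ≤ 1 := by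
        intro u hu w hw hadj
        by_cases huB : u ∈ B <;> by_cases hwB : w ∈ B
        · rw [hlam2B u huB, hlam2B w hwB]; exact hlam u huB w hwB hadj
        · exact hBA u huB w ⟨hw, hwB⟩ hadj
        · rw [abs_sub_comm]; exact hBA w hwB u ⟨hu, huB⟩ hadj.symm
        · have : Comp G A u = Comp G A w :=
            (comp_eq_of_mem (show w ∈ Comp G A u from
              (SimpleGraph.Adj.reachable ⟨hadj, ⟨hu, huB⟩, ⟨hw, hwB⟩⟩))).symm
          rw [hcompeq u ⟨hu, huB⟩ w ⟨hw, hwB⟩ this]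
          simp
      refine ⟨lam2, hlay, ?_⟩
      intro a c hac
      have hac' : c + 1 ≤ a + (r k : ℤ) := by simpa using hac
      have hac'' : c + 1 ≤ a + ((r' (0 + j) : ℕ) : ℤ) := by
        rw [Nat.zero_add]
        have h0 := hr' j k hk
        have h1 : (r k : ℤ) ≤ (r' j : ℤ) := by exact_mod_cast h0
        omega
      have hbase' := hw a c hac''
      set B'' : Set V := {u | u ∈ B ∧ lam u ∈ Set.Icc a c} with hB''def
      set S'' : Set V := {v | v ∈ S ∧ lam2 v ∈ Set.Icc a c} with hS''def
      have hSB'' : S'' \ B'' ⊆ A := by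
        rintro z ⟨⟨hzS, hzI⟩, hzB⟩
        by_cases hzB' : z ∈ B
        · exact absurd ⟨hzB', by rwa [← hlam2B z hzB']⟩ hzB
        · exact ⟨hzS, hzB'⟩
      have hval : ∀ x ∈ A, ∀ y ∈ Comp G A x, lam2 y = lam2 x := by
        intro x hx y hy
        exact hcompeq y (comp_subset hx hy) x hx (comp_eq_of_mem hy)
      have hpres : ∀ x ∈ S'' \ B'', Comp G (S'' \ B'') x = Comp G A x := by
        intro x hx
        refine comp_eq_shrink hSB'' ?_
        intro y hy
        have hyA : y ∈ A := comp_subset (hSB'' hx) hy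
        have hl : lam2 y = lam2 x := hval x (hSB'' hx) y hy
        exact ⟨⟨hyA.1, by rw [hl]; exact hx.1.2⟩, fun hyB'' => hyA.2 hyB''.1⟩
      have hKsub : ∀ x ∈ S'' \ B'', KAtt G (S'' \ B'') B'' x ⊆ KAtt G A B x := by
        intro x hx u hu
        obtain ⟨hu1, c', hc', hadj⟩ := hu
        rw [hpres x hx] at hc'
        exact ⟨hu1.1, c', hc', hadj⟩
      have hst' : St G r' s t₁ t₂ b (j + 1) (k + 1) S'' B'' := by
        refine ⟨?_, by omega, by omega,
          bakerWins_congr (fun i => congrArg r' (by omega)) hbase', ?_, ?_, ?_, fun _ => by omega⟩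
        · intro u hu
          exact ⟨hBS hu.1, by rw [hlam2B u hu.1]; exact hu.2⟩
        · intro x hx
          rw [hpres x hx]
          exact hcomp x (hSB'' hx)
        · intro x hx u hu w' hw' hne'
          exact hclique x (hSB'' hx) u (hKsub x hx hu) w' (hKsub x hx hw') hne'
        · intro x hx u hu c' hc'
          rw [hpres x hx] at hc'
          exact hord x (hSB'' hx) u (hKsub x hx hu) c' hc'
      have := IH b (j + 1) (k + 1) S'' B'' (Nat.lt_succ_self b) hst'
      rw [show 2 * t₁ + 2 + t₂ - (k + 1) = t from by omega] at this
      exact bakerWins_congr (fun i => congrArg r (by omega)) this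

end Step
section Key

variable {V : Type*} [Fintype V] [LinearOrder V]

omit [Fintype V] in
private lemma min'_congr {s t : Finset V} (h : s = t) (hs : s.Nonempty) (ht : t.Nonempty) :
    s.min' hs = t.min' ht := by subst h; rfl

/-- The main lemma: Destroyer wins on any clique-sum state. -/
lemma key (G : SimpleGraph V) (r r' s : ℕ → ℕ) (t₁ t₂ : ℕ)
    (hr' : ∀ j k, k ≤ 2 * j + 1 → r k ≤ r' j)
    (hs : ∀ i m, m ≤ 2 * t₁ + 1 → r (i + m) ≤ s i) :
    ∀ b j k (S B : Set V), St G r' s t₁ t₂ b j k S B →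
      BakerWins G (2 * t₁ + 2 + t₂ - k) S (fun i => r (i + k)) := by
  classical
  intro b
  induction b using Nat.strong_induction_on with
  | _ b IH =>
  intro j k S B hst
  by_cases hS : S = ∅
  · subst hS; exact bakerWins_empty _ _
  set A := S \ B with hA
  by_cases hemp : ∃ x ∈ A, KAtt G A B x = ∅
  case neg =>
    exact step G r r' s t₁ t₂ hr' b (fun b' j' k' S' B' hb' => IH b' hb' j' k' S' B')
      j k S B hst (fun x hx => Set.nonempty_iff_ne_empty.2 (fun h => hemp ⟨x, hx, h⟩))
  case pos =>
    have hk2 : k ≤ 2 * j := hst.hke hemp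
    have hjt : j ≤ t₁ := by have := hst.hjb; omega
    obtain ⟨t, ht⟩ : ∃ t, 2 * t₁ + 2 + t₂ - k = t + 1 := ⟨2 * t₁ + 1 + t₂ - k, by omega⟩
    rw [ht, bakerWins_succ_iff]
    right; right
    set e := Fintype.equivFin V with hedef
    have hmne : ∀ v : V, ((Set.toFinite (Comp G A v)).toFinset).Nonempty :=
      fun v => ⟨v, (Set.Finite.mem_toFinset _).2 (mem_comp_self _ v)⟩
    set mrep : V → V := fun v => ((Set.toFinite (Comp G A v)).toFinset).min' (hmne v)
      with hmrepdef
    have hmrep_mem : ∀ v, mrep v ∈ Comp G A v :=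
      fun v => (Set.Finite.mem_toFinset _).1 (Finset.min'_mem _ _)
    have hmrep_congr : ∀ u w, Comp G A u = Comp G A w → mrep u = mrep w := by
      intro u w h
      exact min'_congr (by rw [h]) _ _
    have hmrep_inj : ∀ u w, mrep u = mrep w → Comp G A u = Comp G A w := by
      intro u w h
      have h1 := comp_eq_of_mem (hmrep_mem u)
      have h2 := comp_eq_of_mem (hmrep_mem w)
      rw [← h1, ← h2, h]
    set cond : V → Prop := fun v => v ∈ A ∧ KAtt G A B v = ∅ with hconddef
    set lamS : V → ℤ :=
      fun v => if cond v then ((r k : ℤ) + 1) * (1 + (e (mrep v) : ℕ)) else 0 with hlamSdef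
    have hcondeq : ∀ u w, u ∈ A → w ∈ A → Comp G A u = Comp G A w → (cond u ↔ cond w) := by
      intro u w hu hw h
      simp only [hconddef, KAtt, h]
      tauto
    have hlay : ∀ u ∈ S, ∀ w ∈ S, G.Adj u w → |lamS u - lamS w| ≤ 1 := by
      intro u hu w hw hadj
      by_cases hcu : cond u <;> by_cases hcw : cond w
      · have hcc : Comp G A u = Comp G A w :=
          (comp_eq_of_mem (show w ∈ Comp G A u from
            (SimpleGraph.Adj.reachable ⟨hadj, hcu.1, hcw.1⟩))).symm
        simp only [hlamSdef, if_pos hcu, if_pos hcw, hmrep_congr u w hcc]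
        simp
      · exfalso
        by_cases hwB : w ∈ B
        · have : w ∈ KAtt G A B u := ⟨hwB, u, mem_comp_self _ u, hadj.symm⟩
          rw [hcu.2] at this
          exact this
        · have hwA : w ∈ A := ⟨hw, hwB⟩
          have hcc : Comp G A u = Comp G A w :=
            (comp_eq_of_mem (show w ∈ Comp G A u from
              (SimpleGraph.Adj.reachable ⟨hadj, hcu.1, hwA⟩))).symm
          exact hcw ((hcondeq u w hcu.1 hwA hcc).1 hcu)
      · exfalso
        by_cases huB : u ∈ B
        · have : u ∈ KAtt G A B w := ⟨huB, w, mem_comp_self _ w, hadj⟩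
          rw [hcw.2] at this
          exact this
        · have huA : u ∈ A := ⟨hu, huB⟩
          have hcc : Comp G A w = Comp G A u :=
            (comp_eq_of_mem (show u ∈ Comp G A w from
              (SimpleGraph.Adj.reachable ⟨hadj.symm, hcw.1, huA⟩))).symm
          exact hcu ((hcondeq w u hcw.1 huA hcc).1 hcw)
      · simp only [hlamSdef, if_neg hcu, if_neg hcw]
        simp
    refine ⟨lamS, hlay, ?_⟩
    intro a c hac
    have hac' : c + 1 ≤ a + (r k : ℤ) := by simpa using hac
    by_cases hex : ∃ v, (v ∈ S ∧ lamS v ∈ Set.Icc a c) ∧ cond v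
    · -- the interval contains a single empty-attachment component
      obtain ⟨v, hvS', hvc⟩ := hex
      have hvI : ((r k : ℤ) + 1) * (1 + (e (mrep v) : ℕ)) ∈ Set.Icc a c := by
        have := hvS'.2
        simpa only [hlamSdef, if_pos hvc] using this
      have hsub : {x | x ∈ S ∧ lamS x ∈ Set.Icc a c} ⊆ Comp G A v := by
        rintro w ⟨hwS, hwI⟩
        by_cases hcw : cond w
        · -- same component
          simp only [hlamSdef, if_pos hcw] at hwI
          have heq : mrep w = mrep v := by
            by_contra hnemr
            have hNe : ((e (mrep w) : ℕ) : ℤ) ≠ ((e (mrep v) : ℕ) : ℤ) := by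
              intro hcast
              exact hnemr (e.injective (Fin.ext (by exact_mod_cast hcast)))
            set M : ℤ := (r k : ℤ) + 1 with hM
            have hMpos : 0 < M := by positivity
            have hXY : M * (1 + ((e (mrep w) : ℕ) : ℤ)) - M * (1 + ((e (mrep v) : ℕ) : ℤ))
                = M * (((e (mrep w) : ℕ) : ℤ) - ((e (mrep v) : ℕ) : ℤ)) := by ring
            have h1 : (1 : ℤ) ≤ |((e (mrep w) : ℕ) : ℤ) - ((e (mrep v) : ℕ) : ℤ)| :=
              Int.one_le_abs (sub_ne_zero.mpr hNe)
            have h2 : M ≤ |M * (((e (mrep w) : ℕ) : ℤ) - ((e (mrep v) : ℕ) : ℤ))| := by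
              rw [abs_mul, abs_of_pos hMpos]
              exact le_mul_of_one_le_right (le_of_lt hMpos) h1
            rw [← hXY] at h2
            rw [le_abs] at h2
            obtain ⟨hw1, hw2⟩ := hwI
            obtain ⟨hv1, hv2⟩ := hvI
            rcases h2 with h2 | h2 <;> omega
          exact (show Comp G A w = Comp G A v from hmrep_inj w v heq) ▸ mem_comp_self _ w
        · exfalso
          simp only [hlamSdef, if_neg hcw] at hwI
          set M : ℤ := (r k : ℤ) + 1 with hM
          have hMpos : 0 < M := by positivity
          have hbig : M ≤ M * (1 + ((e (mrep v) : ℕ) : ℤ)) :=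
            le_mul_of_one_le_right (le_of_lt hMpos) (by omega)
          obtain ⟨hw1, hw2⟩ := hwI
          obtain ⟨hv1, hv2⟩ := hvI
          omega
      have h1 : BakerWins G t₂ (Comp G A v) s := hst.hcomp v hvc.1
      have h2 : BakerWins G t₂ (Comp G A v) (fun i => r (i + (k + 1))) :=
        bakerWins_anti (fun i => hs i (k + 1) (by omega)) h1
      have h3 := bakerWins_subset hsub h2
      have h4 := bakerWins_mono (show t₂ ≤ t from by omega) h3
      exact bakerWins_congr (fun i => congrArg r (by omega)) h4
    · -- no empty component meets the interval: it is part of the "layer 0" game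
      set S₀ : Set V := {v | v ∈ S ∧ ¬ cond v} with hS₀def
      have hsub : {x | x ∈ S ∧ lamS x ∈ Set.Icc a c} ⊆ S₀ :=
        fun w hw => ⟨hw.1, fun hc => hex ⟨w, hw, hc⟩⟩
      have hS₀S : S₀ ⊆ S := fun z hz => hz.1
      have hS₀A : S₀ \ B ⊆ A := fun z hz => ⟨hz.1.1, hz.2⟩
      have hpres : ∀ x ∈ S₀ \ B, Comp G (S₀ \ B) x = Comp G A x := by
        intro x hx
        refine comp_eq_shrink hS₀A ?_
        intro y hy
        have hyA : y ∈ A := comp_subset (hS₀A hx) hy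
        have hKK : KAtt G A B y = KAtt G A B x := by
          simp only [KAtt, comp_eq_of_mem hy]
        have hncx : ¬ cond x := hx.1.2
        have hKne : KAtt G A B x ≠ ∅ := fun h => hncx ⟨hS₀A hx, h⟩
        exact ⟨⟨hyA.1, fun hcy => hKne (hKK ▸ hcy.2)⟩, hyA.2⟩
      have hKeq : ∀ x ∈ S₀ \ B, KAtt G (S₀ \ B) B x = KAtt G A B x := by
        intro x hx
        simp only [KAtt, hpres x hx]
      have hst₀ : St G r' s t₁ t₂ b j (k + 1) S₀ B := by
        refine ⟨?_, hst.hjb, by omega, hst.hbase, ?_, ?_, ?_, ?_⟩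
        · intro u hu
          exact ⟨hst.hBS hu, fun hc => hc.1.2 hu⟩
        · intro x hx
          rw [hpres x hx]
          exact hst.hcomp x (hS₀A hx)
        · intro x hx u hu w' hw' hne'
          rw [hKeq x hx] at hu hw'
          exact hst.hclique x (hS₀A hx) u hu w' hw' hne'
        · intro x hx u hu c' hc'
          rw [hKeq x hx] at hu
          rw [hpres x hx] at hc'
          exact hst.hord x (hS₀A hx) u hu c' hc'
        · rintro ⟨x, hx, hKempty⟩
          exfalso
          rw [hKeq x hx] at hKempty
          exact (hx.1.2 : ¬ cond x) ⟨hS₀A hx, hKempty⟩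
      have hne₀ : ∀ x ∈ S₀ \ B, (KAtt G (S₀ \ B) B x).Nonempty := by
        intro x hx
        rw [hKeq x hx]
        exact Set.nonempty_iff_ne_empty.2 (fun h => (hx.1.2 : ¬ cond x) ⟨hS₀A hx, h⟩)
      have W := step G r r' s t₁ t₂ hr' b (fun b' j' k' S' B' hb' => IH b' hb' j' k' S' B')
        j (k + 1) S₀ B hst₀ hne₀
      rw [show 2 * t₁ + 2 + t₂ - (k + 1) = t from by omega] at W
      exact bakerWins_congr (fun i => congrArg r (by omega)) (bakerWins_subset hsub W)

end Key
/-- If `C₁` and `C₂` are Baker classes, then `C₁ ⊕ C₂` is a Baker class. -/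
theorem stmt_4 (C₁ C₂ : Set OrderedGraph)
    (h₁ : IsBakerClass C₁) (h₂ : IsBakerClass C₂) :
    IsBakerClass (CliqueSum C₁ C₂) := by
  intro r hr
  set r' : ℕ → ℕ := fun j => (Finset.range (2 * j + 2)).sup r with hr'def
  have hr'pos : ∀ j, 0 < r' j :=
    fun j => lt_of_lt_of_le (hr 0) (Finset.le_sup (Finset.mem_range.2 (by omega)))
  obtain ⟨t₁, ht₁⟩ := h₁ r' hr'pos
  set s : ℕ → ℕ := fun i => (Finset.range (2 * t₁ + 2)).sup (fun m => r (i + m)) with hsdef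
  have hspos : ∀ i, 0 < s i := by
    intro i
    refine lt_of_lt_of_le (hr i) ?_
    have := Finset.le_sup (f := fun m => r (i + m))
      (Finset.mem_range.2 (show 0 < 2 * t₁ + 2 by omega))
    simpa using this
  obtain ⟨t₂, ht₂⟩ := h₂ s hspos
  refine ⟨2 * t₁ + 2 + t₂, ?_⟩
  rintro O ⟨B, hB₁, hcomps⟩
  have hr'le : ∀ j k, k ≤ 2 * j + 1 → r k ≤ r' j :=
    fun j k hk => Finset.le_sup (Finset.mem_range.2 (by omega))
  have hsle : ∀ i m, m ≤ 2 * t₁ + 1 → r (i + m) ≤ s i := by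
    intro i m hm
    exact Finset.le_sup (f := fun m => r (i + m)) (Finset.mem_range.2 (by omega))
  have hBc : Set.univ \ B = Bᶜ := (Set.compl_eq_univ_diff B).symm
  have hcompOf : ∀ x ∈ Set.univ \ B,
      IsComponentOf O.graph B (Comp O.graph (Set.univ \ B) x) := by
    intro x hx
    exact ⟨x, hx.2, by rw [hBc]; rfl⟩
  have hst : St O.graph r' s t₁ t₂ t₁ 0 0 Set.univ B := by
    refine ⟨Set.subset_univ B, by omega, by omega, ?_, ?_, ?_, ?_, fun _ => by omega⟩
    · have h0 := ht₁ (O.induce B) hB₁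
      have h1 := (bakerWins_induce_iff O.graph B t₁ Set.univ r').1 h0
      rw [Subtype.coe_image_univ] at h1
      exact h1
    · intro x hx
      obtain ⟨h2, _, _⟩ := hcomps _ (hcompOf x hx)
      have h0 := ht₂ _ h2
      have h1 := (bakerWins_induce_iff O.graph _ t₂ Set.univ s).1 h0
      rwa [Subtype.coe_image_univ] at h1
    · intro x hx u hu w hw hne
      obtain ⟨_, h3, _⟩ := hcomps _ (hcompOf x hx)
      exact h3 u hu.1 hu.2 w hw.1 hw.2 hne
    · intro x hx u hu c hc
      obtain ⟨_, _, h4⟩ := hcomps _ (hcompOf x hx)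
      exact h4 u hu.1 hu.2 c hc
  have hfin := key O.graph r r' s t₁ t₂ hr'le hsle t₁ 0 0 Set.univ B hst
  rw [Nat.sub_zero] at hfin
  exact bakerWins_congr (fun i => congrArg r (by omega)) hfin
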